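/- Let n ≥ 2 and let N be the directed n-cycle network: vertices V = {1, …, n}, edges i → i+1 (indices mod n) each of capacity 1, with every vertex a boundary vertex (∂V = V). Then for every subset I with ∅ ≠ I ⊊ V, the cycle-flow entropy satisfies S(I) = 1. (This realizes the entropy vector of the n-party GHZ state.) -/

import Mathlib

open scoped Classical

/-- An edge cycle: a nonempty cyclically ordered sequence of distinct directed
edges (each a source-target pair) with the target of each edge equal to the
source of the next (cyclically). -/
structure EdgeCycle (V : Type*) where
  n : ℕ
  npos : 0 < n
  edge : Fin n → V × V
  inj : Function.Injective edge
  chain : ∀ i : Fin n, (edge i).2 = (edge ⟨(i.val + 1) % n, Nat.mod_lt _ npos⟩).1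

/-- Membership of a directed edge in an edge cycle. -/
def EdgeCycle.Mem {V : Type*} (C : EdgeCycle V) (e : V × V) : Prop :=
  ∃ i, C.edge i = e

/-- The cycle visits a vertex of `S`: some edge of the cycle has its target in `S`. -/
def EdgeCycle.Visits {V : Type*} (C : EdgeCycle V) (S : Finset V) : Prop :=
  ∃ i, (C.edge i).2 ∈ S

/-- A simple cycle flow: an edge cycle together with a nonnegative flux. -/
structure CycleFlow (V : Type*) where
  cyc : EdgeCycle V
  flux : ℝ
  flux_nonneg : 0 ≤ flux

/-- The total load that a finite family of simple cycle flows places on the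
directed edge `(u, v)`. -/
noncomputable def edgeLoad {V : Type*} (F : List (CycleFlow V)) (u v : V) : ℝ :=
  (F.map (fun C => if C.cyc.Mem (u, v) then C.flux else 0)).sum

/-- A finite family of simple cycle flows is a multi-cycle flow on the network
with capacity function `c` if on every edge the total load is at most the capacity. -/
def Feasible {V : Type*} (c : V → V → ℝ) (F : List (CycleFlow V)) : Prop :=
  ∀ u v, edgeLoad F u v ≤ c u v

/-- The flux of a multi-cycle flow between two (disjoint) vertex sets `I` and `J`:
the sum of the fluxes of those simple cycle flows visiting both a vertex of `I`
and a vertex of `J`. -/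
noncomputable def mflux {V : Type*} (F : List (CycleFlow V)) (I J : Finset V) : ℝ :=
  (F.map (fun C => if C.cyc.Visits I ∧ C.cyc.Visits J then C.flux else 0)).sum

/-- The cycle-flow entropy of a subset `I` of the boundary vertices `bdry`:
the maximal flux between `I` and its boundary complement over all
multi-cycle flows. -/
noncomputable def entropy {V : Type*} (c : V → V → ℝ) (bdry I : Finset V) : ℝ :=
  sSup { x | ∃ F : List (CycleFlow V), Feasible c F ∧ mflux F I (bdry \ I) = x }

/-- A network is balanced if at every vertex the total capacity of ingoing edges
equals the total capacity of outgoing edges. -/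
def BalancedNet {V : Type*} [Fintype V] (c : V → V → ℝ) : Prop :=
  ∀ v : V, (∑ u, c u v) = ∑ u, c v u

/-- The residual capacity function of a network `c` with respect to a
multi-cycle flow `F`. -/
noncomputable def resid {V : Type*} (c : V → V → ℝ) (F : List (CycleFlow V)) : V → V → ℝ :=
  fun u v => c u v - edgeLoad F u v

/-- `F'` is a multi-cycle subflow of `F`: same edge cycles, smaller fluxes. -/
def Subflow {V : Type*} (F' F : List (CycleFlow V)) : Prop :=
  List.Forall₂ (fun C' C => C'.cyc = C.cyc ∧ C'.flux ≤ C.flux) F' F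

/-- The nesting property: for every pair of disjoint boundary subsets `I`, `J`
there is a single multi-cycle flow simultaneously maximizing the flux through
`I` and through `I ∪ J`. -/
def Nesting {V : Type*} (c : V → V → ℝ) (bdry : Finset V) : Prop :=
  ∀ I J : Finset V, I ⊆ bdry → J ⊆ bdry → Disjoint I J →
    ∃ F : List (CycleFlow V), Feasible c F ∧
      mflux F I (bdry \ I) = entropy c bdry I ∧
      mflux F (I ∪ J) (bdry \ (I ∪ J)) = entropy c bdry (I ∪ J)

/-- The directed `n`-cycle network: an edge `i → i + 1 (mod n)` of capacity `1`
for each vertex `i`. -/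
noncomputable def cycleCap (n : ℕ) : Fin n → Fin n → ℝ :=
  fun i j => if j.val = (i.val + 1) % n then 1 else 0

def nxt {n : ℕ} (hn : 0 < n) (w : Fin n) : Fin n := ⟨(w.val + 1) % n, Nat.mod_lt _ hn⟩

lemma cycle_struct {n : ℕ} (hn : 0 < n) (C : EdgeCycle (Fin n))
    (h : ∀ i, ((C.edge i).2).val = (((C.edge i).1).val + 1) % n) :
    ∀ w : Fin n, C.Mem (w, nxt hn w) := by
  set N := C.n with hN
  have hN0 : 0 < N := C.npos
  set f0 : ℕ := ((C.edge ⟨0, hN0⟩).1).val with hf0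
  have hf0n : f0 < n := ((C.edge ⟨0, hN0⟩).1).isLt
  have claim1 : ∀ k (hk : k < N), ((C.edge ⟨k, hk⟩).1).val = (f0 + k) % n := by
    intro k
    induction k with
    | zero => intro hk; simp [Nat.mod_eq_of_lt hf0n]; rfl
    | succ k ih =>
      intro hk
      have hk' : k < N := Nat.lt_of_succ_lt hk
      have hchain := C.chain ⟨k, hk'⟩
      have hidx : (⟨(k+1) % N, Nat.mod_lt _ hN0⟩ : Fin N) = ⟨k+1, hk⟩ :=
        Fin.ext (Nat.mod_eq_of_lt hk)
      rw [hidx] at hchain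
      have h2 : ((C.edge ⟨k+1, hk⟩).1).val = (((C.edge ⟨k, hk'⟩).1).val + 1) % n := by
        rw [← hchain]; exact h ⟨k, hk'⟩
      rw [h2, ih hk', Nat.mod_add_mod]
      congr 1
  have hclose : f0 = (f0 + N) % n := by
    have hk' : N - 1 < N := by omega
    have hchain := C.chain ⟨N - 1, hk'⟩
    have hidx : (⟨(N-1+1) % N, Nat.mod_lt _ hN0⟩ : Fin N) = ⟨0, hN0⟩ := by
      apply Fin.ext
      show (N-1+1) % N = 0
      have : N - 1 + 1 = N := by omega
      rw [this, Nat.mod_self]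
    rw [hidx] at hchain
    calc f0 = ((C.edge ⟨N-1, hk'⟩).2).val := by rw [hchain]
      _ = (((C.edge ⟨N-1, hk'⟩).1).val + 1) % n := h _
      _ = ((f0 + (N-1)) % n + 1) % n := by rw [claim1 _ hk']
      _ = (f0 + (N-1) + 1) % n := by rw [Nat.mod_add_mod]
      _ = (f0 + N) % n := by congr 1; omega
  have hdvd : n ∣ N := by
    set r := N % n with hr
    have hrn : r < n := Nat.mod_lt _ hn
    have heq : f0 = (f0 + r) % n := by rw [hr, Nat.add_mod_mod]; exact hclose
    rcases Nat.lt_or_ge (f0 + r) n with hlt | hge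
    · rw [Nat.mod_eq_of_lt hlt] at heq
      exact Nat.dvd_of_mod_eq_zero (by omega)
    · rw [Nat.mod_eq_sub_mod hge, Nat.mod_eq_of_lt (by omega)] at heq
      omega
  have hNn : N = n := by
    rcases Nat.lt_or_ge n N with hlt | hge
    · exfalso
      have h0n : (0 : ℕ) < N := hN0
      have hval : ((C.edge ⟨n, hlt⟩).1).val = f0 := by
        rw [claim1 n hlt, Nat.add_mod_right, Nat.mod_eq_of_lt hf0n]
      have hedge : C.edge ⟨n, hlt⟩ = C.edge ⟨0, hN0⟩ := by
        have h1 : (C.edge ⟨n, hlt⟩).1 = (C.edge ⟨0, hN0⟩).1 := Fin.ext hval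
        have h2 : (C.edge ⟨n, hlt⟩).2 = (C.edge ⟨0, hN0⟩).2 := by
          apply Fin.ext
          rw [h ⟨n, hlt⟩, h ⟨0, hN0⟩, hval]
        exact Prod.ext h1 h2
      have := C.inj hedge
      have : n = 0 := by simpa [Fin.ext_iff] using this
      omega
    · exact le_antisymm hge (Nat.le_of_dvd hN0 hdvd)
  intro w
  have hk : (w.val + n - f0) % n < N := by rw [hNn]; exact Nat.mod_lt _ hn
  refine ⟨⟨(w.val + n - f0) % n, hk⟩, ?_⟩
  have hv1 : ((C.edge ⟨(w.val + n - f0) % n, hk⟩).1).val = w.val := by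
    rw [claim1 _ hk, Nat.add_mod_mod]
    have hle : f0 + (w.val + n - f0) = w.val + n := by omega
    rw [hle, Nat.add_mod_right, Nat.mod_eq_of_lt w.isLt]
  refine Prod.ext (Fin.ext hv1) (Fin.ext ?_)
  show ((C.edge ⟨(w.val + n - f0) % n, hk⟩).2).val = (w.val + 1) % n
  rw [h, hv1]
/-- A network-edge cycle visits every nonempty set. -/
lemma cycle_visits {n : ℕ} (hn : 0 < n) (C : EdgeCycle (Fin n))
    (h : ∀ i, ((C.edge i).2).val = (((C.edge i).1).val + 1) % n)
    (S : Finset (Fin n)) (hS : S.Nonempty) : C.Visits S := by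
  obtain ⟨s, hs⟩ := hS
  set w : Fin n := ⟨(s.val + n - 1) % n, Nat.mod_lt _ hn⟩ with hw
  obtain ⟨i, hi⟩ := cycle_struct hn C h w
  refine ⟨i, ?_⟩
  have : (C.edge i).2 = nxt hn w := by rw [hi]
  rw [this]
  have hval : (nxt hn w).val = s.val := by
    show ((s.val + n - 1) % n + 1) % n = s.val
    rw [Nat.mod_add_mod]
    have h1 : s.val + n - 1 + 1 = s.val + n := by omega
    rw [h1, Nat.add_mod_right, Nat.mod_eq_of_lt s.isLt]
  have : nxt hn w = s := Fin.ext hval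
  rw [this]; exact hs

/-- The full-cycle flow with flux 1. -/
noncomputable def fullCF {n : ℕ} (hn : 0 < n) : CycleFlow (Fin n) where
  cyc :=
    { n := n
      npos := hn
      edge := fun i => (i, nxt hn i)
      inj := fun i j hij => (Prod.ext_iff.mp hij).1
      chain := fun i => rfl }
  flux := 1
  flux_nonneg := zero_le_one

lemma fullCF_h {n : ℕ} (hn : 0 < n) :
    ∀ i, (((fullCF hn).cyc.edge i).2).val = ((((fullCF hn).cyc.edge i).1).val + 1) % n :=
  fun _ => rfl

lemma fullCF_feasible {n : ℕ} (hn : 0 < n) : Feasible (cycleCap n) [fullCF hn] := by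
  intro u v
  simp only [edgeLoad, List.map_cons, List.map_nil, List.sum_cons, List.sum_nil, add_zero]
  by_cases hm : (fullCF hn).cyc.Mem (u, v)
  · obtain ⟨i, hi⟩ := hm
    have h1 : (i : Fin n) = u := (Prod.ext_iff.mp hi).1
    have h2 : nxt hn i = v := (Prod.ext_iff.mp hi).2
    have : v.val = (u.val + 1) % n := by rw [← h1, ← h2]; rfl
    rw [if_pos ⟨i, hi⟩, cycleCap, if_pos this]
    exact le_of_eq rfl
  · rw [if_neg hm]
    unfold cycleCap
    split <;> norm_num

lemma fullCF_mflux {n : ℕ} [inst : DecidableEq (Fin n)] (hn : 0 < n) (I : Finset (Fin n)) (hne : I.Nonempty)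
    (hproper : I ≠ Finset.univ) :
    mflux [fullCF hn] I (Finset.univ \ I) = 1 := by
  have hJ : (Finset.univ \ I).Nonempty := by
    rw [Finset.sdiff_nonempty]
    intro hsub
    exact hproper (Finset.univ_subset_iff.mp hsub)
  have hv1 : (fullCF hn).cyc.Visits I := cycle_visits hn _ (fullCF_h hn) I hne
  have hv2 : (fullCF hn).cyc.Visits (Finset.univ \ I) :=
    cycle_visits hn _ (fullCF_h hn) _ hJ
  rw [mflux]
  simp only [List.map_cons, List.map_nil, List.sum_cons, List.sum_nil, add_zero]
  rw [if_pos (And.intro hv1 hv2)]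
  rfl

/-- Upper bound: any feasible multi-cycle flow has flux at most 1. -/
lemma flux_le_one {n : ℕ} (hn : 2 ≤ n) (F : List (CycleFlow (Fin n)))
    (hF : Feasible (cycleCap n) F) (I J : Finset (Fin n)) :
    mflux F I J ≤ 1 := by
  have hn0 : 0 < n := by omega
  set e0 : Fin n := ⟨0, hn0⟩ with he0
  have key : mflux F I J ≤ edgeLoad F e0 (nxt hn0 e0) := by
    apply List.sum_le_sum
    intro C hC
    rcases le_or_gt C.flux 0 with h0 | hpos
    · have hz : C.flux = 0 := le_antisymm h0 C.flux_nonneg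
      split_ifs <;> simp [hz]
    · -- every edge of C is a network edge
      have hedges : ∀ i, ((C.cyc.edge i).2).val = (((C.cyc.edge i).1).val + 1) % n := by
        intro i
        by_contra hne
        set u := (C.cyc.edge i).1 with hu
        set v := (C.cyc.edge i).2 with hv
        have hcap : cycleCap n u v = 0 := by rw [cycleCap, if_neg hne]
        have hload : edgeLoad F u v ≤ 0 := le_of_le_of_eq (hF u v) hcap
        have hmem : C.cyc.Mem (u, v) := ⟨i, rfl⟩
        have hge : C.flux ≤ edgeLoad F u v := by
          have : (if C.cyc.Mem (u, v) then C.flux else 0) = C.flux := if_pos hmem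
          rw [← this]
          apply List.single_le_sum
          · intro x hx
            simp only [List.mem_map] at hx
            obtain ⟨D, _, hD⟩ := hx
            rw [← hD]
            split_ifs
            · exact D.flux_nonneg
            · exact le_refl 0
          · exact List.mem_map_of_mem hC
        linarith
      have hmem : C.cyc.Mem (e0, nxt hn0 e0) := cycle_struct hn0 C.cyc hedges e0
      rw [if_pos hmem]
      split_ifs
      · exact le_refl _
      · exact C.flux_nonneg
  refine key.trans ((hF e0 (nxt hn0 e0)).trans ?_)
  have hc : (nxt hn0 e0).val = (e0.val + 1) % n := rfl
  rw [cycleCap, if_pos hc]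


/-- On the directed `n`-cycle network with all vertices boundary vertices, every
proper nonempty subset has cycle-flow entropy `1` (the `n`-party GHZ entropies). -/
theorem stmt12 (n : ℕ) (hn : 2 ≤ n) (I : Finset (Fin n)) (hne : I.Nonempty)
    (hproper : I ≠ Finset.univ) :
    entropy (cycleCap n) Finset.univ I = 1 := by
  have hn0 : 0 < n := by omega
  have hinst : (fun a b => Classical.propDecidable (a = b) : DecidableEq (Fin n))
      = instDecidableEqFin n := Subsingleton.elim _ _
  apply IsGreatest.csSup_eq
  constructor
  · refine ⟨[fullCF hn0], fullCF_feasible hn0, ?_⟩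
    convert fullCF_mflux hn0 I hne hproper
  · rintro x ⟨F, hF, rfl⟩
    exact flux_le_one hn F hF I _
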